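/- Let p, q, r, s be integers with p > 0 and qs + pr = 1, and let α₁⁰, α₂⁰ be nonzero integers with gcd(α₁⁰,α₂⁰) = 1. Set u := gcd(p, sα₁⁰ − α₂⁰), α := p/u, α₁' := (sα₁⁰ − α₂⁰)/u, α₁ := α·α₁⁰ and α₂ := α·α₂⁰. Let β₁, β₁' be integers with α₁β₁' − β₁α₁' = 1 and set β₂ := −sβ₁ + pβ₁'. Then for any integers α₂', β₂' with α₂β₂' − β₂α₂' = 1, one has α₁β₂' + β₁α₂' ≡ q (mod p). -/

import Mathlib

/-- In the algorithm constructing a Seifert fibration of `L(p,q)` from coprime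
nonzero integers `α₁⁰, α₂⁰`: with `u = gcd(p, sα₁⁰ − α₂⁰)`, `α = p/u`,
`α₁' = (sα₁⁰ − α₂⁰)/u`, `α₁ = α·α₁⁰`, `α₂ = α·α₂⁰`, `α₁β₁' − β₁α₁' = 1` and
`β₂ = −sβ₁ + pβ₁'`, any integers `α₂', β₂'` with `α₂β₂' − β₂α₂' = 1` satisfy
`α₁β₂' + β₁α₂' ≡ q (mod p)`. -/
theorem algorithm_second_invariant (p q r s α₁₀ α₂₀ : ℤ)
    (hp : 0 < p) (hdet : q * s + p * r = 1)
    (hα₁₀ : α₁₀ ≠ 0) (hα₂₀ : α₂₀ ≠ 0) (hcop : Int.gcd α₁₀ α₂₀ = 1)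
    (u α α₁' α₁ α₂ : ℤ)
    (hu : u = Int.gcd p (s * α₁₀ - α₂₀))
    (hα : α = p / u)
    (hα₁' : α₁' = (s * α₁₀ - α₂₀) / u)
    (hα₁ : α₁ = α * α₁₀) (hα₂ : α₂ = α * α₂₀)
    (β₁ β₁' β₂ : ℤ)
    (hβ : α₁ * β₁' - β₁ * α₁' = 1)
    (hβ₂ : β₂ = -s * β₁ + p * β₁')
    (α₂' β₂' : ℤ) (hβ' : α₂ * β₂' - β₂ * α₂' = 1) :
    α₁ * β₂' + β₁ * α₂' ≡ q [ZMOD p] := by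
  have hdvd1 : u ∣ p := hu ▸ Int.gcd_dvd_left p (s * α₁₀ - α₂₀)
  have hdvd2 : u ∣ (s * α₁₀ - α₂₀) := hu ▸ Int.gcd_dvd_right p (s * α₁₀ - α₂₀)
  have hαu : α * u = p := by rw [hα]; exact Int.ediv_mul_cancel hdvd1
  have hα₁'u : α₁' * u = s * α₁₀ - α₂₀ := by rw [hα₁']; exact Int.ediv_mul_cancel hdvd2
  have key : α₂ = s * α₁ - p * α₁' := by
    rw [hα₂, hα₁, ← hαu]
    linear_combination α * hα₁'u
  -- s * Q ≡ 1 [ZMOD p]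
  have h1 : s * (α₁ * β₂' + β₁ * α₂') ≡ 1 [ZMOD p] := by
    rw [Int.modEq_iff_dvd]
    exact ⟨-(α₁' * β₂' + β₁' * α₂'), by linear_combination -hβ' + β₂' * key - α₂' * hβ₂⟩
  have h2 : s * q ≡ 1 [ZMOD p] := by
    rw [Int.modEq_iff_dvd]
    exact ⟨r, by linear_combination -hdet⟩
  have h3 : s * (α₁ * β₂' + β₁ * α₂') ≡ s * q [ZMOD p] := h1.trans h2.symm
  have hg : Int.gcd p s = 1 := by
    rw [← Int.isCoprime_iff_gcd_eq_one]
    exact ⟨r, q, by linarith⟩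
  simpa [hg] using Int.ModEq.cancel_left_div_gcd hp h3
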